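/- arXiv:math/0503185 — 2 statements merged into one kernel-verified Lean document; each statement's English description precedes it below -/
import Mathlib

section
/- Let $d \in \mathbb{N}$ and $a_{-d}, \dots, a_d \in \mathbb{C}$, and set $B_m = \sum_{k=-d}^{d} a_k \frac{k^m}{m!}$ for $m \in \mathbb{N}$. Define $\lambda_{m,n} = \frac{1}{2\pi} \int_0^{2\pi} (it)^m e^{-int}\, dt$ for $m \in \mathbb{N}$ and $n \in \mathbb{Z}$. Then for every integer $n$ with $-d \leq n \leq d$, $a_n = \sum_{m=0}^{\infty} B_m \lambda_{m,n}$, with the series converging absolutely. -/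
open Finset Complex Real MeasureTheory intervalIntegral

lemma key_orth (k n : ℤ) :
    HasSum (fun m : ℕ => (k:ℂ)^m / (Nat.factorial m) *
      ((1 / (2 * Real.pi)) * ∫ t in (0:ℝ)..(2 * Real.pi),
        (Complex.I * t)^m * Complex.exp (-(Complex.I * n * t))))
      (if k = n then 1 else 0) := by
  have hpi : (0:ℝ) < 2 * Real.pi := by positivity
  set F : ℕ → ℝ → ℂ := fun m t => (k:ℂ)^m / (Nat.factorial m) *
      ((Complex.I * t)^m * Complex.exp (-(Complex.I * n * t))) with hF
  have hnormexp : ∀ t : ℝ, ‖Complex.exp (-(Complex.I * n * t))‖ = 1 := by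
    intro t
    rw [Complex.norm_exp]
    simp [Complex.exp_re]
  have hmain : HasSum (fun m : ℕ => ∫ t in (0:ℝ)..(2 * Real.pi), F m t)
      (∫ t in (0:ℝ)..(2 * Real.pi), Complex.exp (Complex.I * ((k:ℂ) - n) * t)) := by
    apply intervalIntegral.hasSum_integral_of_dominated_convergence
      (bound := fun m t => (|(k:ℝ)| * (2 * Real.pi))^m / (Nat.factorial m))
    · intro m
      apply Continuous.aestronglyMeasurable
      fun_prop
    · intro m
      filter_upwards with t ht
      rw [Set.uIoc_of_le hpi.le] at ht
      have h1 : ‖F m t‖ = (|(k:ℝ)| * |t|)^m / (Nat.factorial m) := by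
        simp [hF, norm_mul, norm_div, norm_pow, hnormexp t, Complex.norm_intCast,
          Complex.norm_real, mul_pow, Int.cast_abs]
        ring
      rw [h1]
      apply div_le_div_of_nonneg_right ?_ (by positivity) |>.trans_eq rfl
      · apply pow_le_pow_left₀ (by positivity)
        have : |t| ≤ 2 * Real.pi := by
          rw [abs_of_pos ht.1]; exact ht.2
        nlinarith [abs_nonneg (k:ℝ), abs_nonneg t, ht.1.le]
    · filter_upwards with t _
      exact Real.summable_pow_div_factorial _
    · exact intervalIntegrable_const
    · filter_upwards with t _
      have h := (NormedSpace.expSeries_div_hasSum_exp (𝔸 := ℂ)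
        (Complex.I * k * t)).mul_right (Complex.exp (-(Complex.I * n * t)))
      rw [← Complex.exp_eq_exp_ℂ] at h
      rw [← Complex.exp_add] at h
      have harg : Complex.I * k * t + -(Complex.I * n * t) = Complex.I * ((k:ℂ) - n) * t := by
        ring
      rw [harg] at h
      convert h using 2 with m
      · rfl
      simp [hF, mul_pow]
      ring
  have hint : (∫ t in (0:ℝ)..(2 * Real.pi), Complex.exp (Complex.I * ((k:ℂ) - n) * t))
      = if k = n then (2 * Real.pi : ℂ) else 0 := by
    by_cases hkn : k = n
    · subst hkn
      simp
    · rw [if_neg hkn]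
      have hc : Complex.I * ((k:ℂ) - n) ≠ 0 := by
        apply mul_ne_zero Complex.I_ne_zero
        intro h
        apply hkn
        have : ((k:ℂ)) = n := by linear_combination h
        exact_mod_cast this
      rw [integral_exp_mul_complex hc]
      have h2 : Complex.I * ((k:ℂ) - n) * (2 * Real.pi : ℝ) = ((k - n : ℤ) : ℂ) * (2 * Real.pi * Complex.I) := by
        push_cast
        ring
      rw [h2, Complex.exp_int_mul_two_pi_mul_I]
      simp
  have hres : HasSum (fun m : ℕ => (1 / (2 * Real.pi) : ℂ) * ∫ t in (0:ℝ)..(2 * Real.pi), F m t)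
      ((1 / (2 * Real.pi) : ℂ) * (if k = n then (2 * Real.pi : ℂ) else 0)) := by
    rw [← hint]
    exact hmain.mul_left _
  have heq : (if k = n then (1:ℂ) else 0) =
      (1 / (2 * Real.pi) : ℂ) * (if k = n then (2 * Real.pi : ℂ) else 0) := by
    have hp : ((Real.pi : ℂ)) ≠ 0 := by exact_mod_cast Real.pi_ne_zero
    by_cases hkn : k = n <;> simp [hkn] <;> field_simp <;> ring
  rw [heq]
  convert hres using 2 with m
  rw [hF]
  simp only
  rw [intervalIntegral.integral_const_mul]
  push_cast
  ring

theorem stmt6 (d : ℕ) (a : ℤ → ℂ)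
    (B : ℕ → ℂ)
    (hB : ∀ m : ℕ, B m = ∑ k ∈ Finset.Icc (-(d:ℤ)) d, a k * (k:ℂ)^m / (Nat.factorial m))
    (lam : ℕ → ℤ → ℂ)
    (hlam : ∀ (m : ℕ) (n : ℤ), lam m n = (1 / (2 * Real.pi)) *
      ∫ t in (0:ℝ)..(2 * Real.pi), (Complex.I * t)^m * Complex.exp (-(Complex.I * n * t))) :
    ∀ n : ℤ, -(d:ℤ) ≤ n → n ≤ d →
      Summable (fun m : ℕ => ‖B m * lam m n‖) ∧
      HasSum (fun m : ℕ => B m * lam m n) (a n) := by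
  intro n hn1 hn2
  have hpi : (0:ℝ) < 2 * Real.pi := by positivity
  constructor
  · -- summability of norms
    set C : ℝ := ∑ k ∈ Finset.Icc (-(d:ℤ)) d, ‖a k‖ with hC
    have hBbd : ∀ m : ℕ, ‖B m‖ ≤ C * ((d:ℝ)^m / (Nat.factorial m)) := by
      intro m
      rw [hB m]
      calc ‖∑ k ∈ Finset.Icc (-(d:ℤ)) d, a k * (k:ℂ)^m / (Nat.factorial m)‖
          ≤ ∑ k ∈ Finset.Icc (-(d:ℤ)) d, ‖a k * (k:ℂ)^m / (Nat.factorial m)‖ :=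
            norm_sum_le _ _
        _ ≤ ∑ k ∈ Finset.Icc (-(d:ℤ)) d, ‖a k‖ * ((d:ℝ)^m / (Nat.factorial m)) := by
            apply Finset.sum_le_sum
            intro k hk
            rw [norm_div, norm_mul, norm_pow]
            simp only [Finset.mem_Icc] at hk
            have hk' : ‖(k:ℂ)‖ ≤ (d:ℝ) := by
              rw [Complex.norm_intCast]
              rw [← Int.cast_abs]
              exact_mod_cast abs_le.mpr ⟨hk.1, hk.2⟩
            have h1 : ‖(k:ℂ)‖^m ≤ (d:ℝ)^m := pow_le_pow_left₀ (norm_nonneg _) hk' m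
            have h2 : ‖((Nat.factorial m : ℂ))‖ = (Nat.factorial m : ℝ) := by
              simp
            rw [h2, mul_div_assoc]
            gcongr
        _ = C * ((d:ℝ)^m / (Nat.factorial m)) := by
            rw [← Finset.sum_mul]
    have hlambd : ∀ m : ℕ, ‖lam m n‖ ≤ (2 * Real.pi)^m := by
      intro m
      rw [hlam m n]
      have hbd : ∀ t ∈ Set.uIoc (0:ℝ) (2 * Real.pi),
          ‖(Complex.I * t)^m * Complex.exp (-(Complex.I * n * t))‖ ≤ (2 * Real.pi)^m := by
        intro t ht
        rw [Set.uIoc_of_le hpi.le] at ht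
        rw [norm_mul, norm_pow, norm_mul]
        have he : ‖Complex.exp (-(Complex.I * n * t))‖ = 1 := by
          rw [Complex.norm_exp]
          simp [Complex.exp_re]
        rw [he, mul_one]
        have : ‖Complex.I‖ * ‖(t:ℂ)‖ = |t| := by simp
        rw [this]
        apply pow_le_pow_left₀ (abs_nonneg t)
        rw [abs_of_pos ht.1]; exact ht.2
      have hI := intervalIntegral.norm_integral_le_of_norm_le_const (C := (2 * Real.pi)^m)
        (fun t ht => hbd t ht)
      rw [norm_mul]
      have h1 : ‖(1 / (2 * (Real.pi:ℂ)))‖ = 1 / (2 * Real.pi) := by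
        simp [norm_div, norm_mul, abs_of_pos Real.pi_pos]
      rw [h1]
      calc (1 / (2 * Real.pi)) * ‖∫ t in (0:ℝ)..(2 * Real.pi),
            (Complex.I * t)^m * Complex.exp (-(Complex.I * n * t))‖
          ≤ (1 / (2 * Real.pi)) * ((2 * Real.pi)^m * |2 * Real.pi - 0|) :=
            mul_le_mul_of_nonneg_left hI (by positivity)
        _ = (2 * Real.pi)^m := by
            rw [abs_of_pos (by linarith), sub_zero]
            field_simp
    refine Summable.of_nonneg_of_le (fun m => norm_nonneg _) (fun m => ?_)
      ((Real.summable_pow_div_factorial (2 * Real.pi * d)).mul_left C)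
    · rw [norm_mul]
      have hC0 : (0:ℝ) ≤ C := Finset.sum_nonneg fun k _ => norm_nonneg _
      calc ‖B m‖ * ‖lam m n‖ ≤ (C * ((d:ℝ)^m / (Nat.factorial m))) * (2 * Real.pi)^m :=
            mul_le_mul (hBbd m) (hlambd m) (norm_nonneg _)
              (mul_nonneg hC0 (by positivity))
        _ = C * ((2 * Real.pi * d)^m / (Nat.factorial m)) := by
            rw [mul_pow]; ring
  · -- HasSum
    have hmem : n ∈ Finset.Icc (-(d:ℤ)) d := Finset.mem_Icc.mpr ⟨hn1, hn2⟩
    have hk : ∀ k ∈ Finset.Icc (-(d:ℤ)) d,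
        HasSum (fun m : ℕ => a k * ((k:ℂ)^m / (Nat.factorial m) * lam m n))
          (a k * if k = n then 1 else 0) := by
      intro k _
      apply HasSum.mul_left
      have := key_orth k n
      convert this using 2 with m
      · rfl
      rw [hlam m n]
    have hsum := hasSum_sum hk
    have h1 : (fun m : ℕ => ∑ k ∈ Finset.Icc (-(d:ℤ)) d,
        a k * ((k:ℂ)^m / (Nat.factorial m) * lam m n)) = fun m => B m * lam m n := by
      funext m
      rw [hB m, Finset.sum_mul]
      apply Finset.sum_congr rfl
      intro k _
      ring
    have h2 : (∑ k ∈ Finset.Icc (-(d:ℤ)) d, a k * if k = n then (1:ℂ) else 0) = a n := by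
      simp only [mul_ite, mul_one, mul_zero]
      rw [Finset.sum_ite_eq' _ n a]
      rw [if_pos hmem]
    rw [h1, h2] at hsum
    exact hsum
end

section
/- Let $d \in \mathbb{N}$, $a_{-d}, \dots, a_d \in \mathbb{C}$, $B_m = \sum_{k=-d}^d a_k \frac{k^m}{m!}$, and $\lambda_{m,n} = \frac{1}{2\pi}\int_0^{2\pi}(it)^m e^{-int} dt$. Define the partial sums $v^N_n = \sum_{m=0}^{N} \lambda_{m,n} B_m$. Then for every integer $n$ with $|n| \leq d$, $\lim_{N \to \infty} v^N_n = a_n$. -/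
open Finset Complex Real Filter Topology

theorem stmt18 (d : ℕ) (a : ℤ → ℂ)
    (B : ℕ → ℂ)
    (hB : ∀ m : ℕ, B m = ∑ k ∈ Finset.Icc (-(d:ℤ)) d, a k * (k:ℂ)^m / (Nat.factorial m))
    (lam : ℕ → ℤ → ℂ)
    (hlam : ∀ (m : ℕ) (n : ℤ), lam m n = (1 / (2 * Real.pi)) *
      ∫ t in (0:ℝ)..(2 * Real.pi), (Complex.I * t)^m * Complex.exp (-(Complex.I * n * t)))
    (v : ℕ → ℤ → ℂ)
    (hv : ∀ (N : ℕ) (n : ℤ), v N n = ∑ m ∈ Finset.range (N + 1), lam m n * B m) :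
    ∀ n : ℤ, |n| ≤ (d:ℤ) → Tendsto (fun N : ℕ => v N n) atTop (𝓝 (a n)) := by
  intro n hn
  have hexp : ∀ z : ℂ, HasSum (fun m : ℕ => z ^ m / (Nat.factorial m)) (Complex.exp z) := by
    intro z
    have := congr_fun Complex.exp_eq_exp_ℂ z
    rw [this, NormedSpace.exp_eq_tsum_div]
    exact (NormedSpace.expSeries_div_summable z).hasSum
  -- key pointwise limit for each k
  have key : ∀ k : ℤ, Tendsto (fun N : ℕ => ∑ m ∈ Finset.range N,
      lam m n * ((k:ℂ) ^ m / (Nat.factorial m))) atTop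
      (𝓝 (if k = n then 1 else 0)) := by
    intro k
    have hrw : ∀ N : ℕ, ∑ m ∈ Finset.range N, lam m n * ((k:ℂ) ^ m / (Nat.factorial m)) =
        (1 / (2 * (Real.pi:ℂ))) * ∫ t in (0:ℝ)..(2 * Real.pi),
          (∑ m ∈ Finset.range N, (Complex.I * k * t) ^ m / (Nat.factorial m)) *
            Complex.exp (-(Complex.I * n * t)) := by
      intro N
      have hInt : ∀ m : ℕ, IntervalIntegrable
          (fun t : ℝ => (Complex.I * k * t) ^ m / (Nat.factorial m) *
            Complex.exp (-(Complex.I * n * t))) MeasureTheory.volume 0 (2 * Real.pi) := by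
        intro m
        apply Continuous.intervalIntegrable
        fun_prop
      have hsm : ∀ t : ℝ, (∑ m ∈ Finset.range N, (Complex.I * k * t) ^ m / (Nat.factorial m)) *
          Complex.exp (-(Complex.I * n * t)) = ∑ m ∈ Finset.range N,
          (Complex.I * k * t) ^ m / (Nat.factorial m) * Complex.exp (-(Complex.I * n * t)) :=
        fun t => Finset.sum_mul _ _ _
      rw [intervalIntegral.integral_congr (fun t _ => hsm t),
        intervalIntegral.integral_finset_sum (fun m _ => hInt m), Finset.mul_sum]
      refine Finset.sum_congr rfl fun m _ => ?_
      rw [hlam m n, mul_assoc]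
      congr 1
      rw [← intervalIntegral.integral_mul_const]
      refine intervalIntegral.integral_congr fun t _ => ?_
      simp only [mul_pow]
      ring
    simp only [hrw]
    -- dominated convergence
    have hlim : Tendsto (fun N : ℕ => ∫ t in (0:ℝ)..(2 * Real.pi),
        (∑ m ∈ Finset.range N, (Complex.I * k * t) ^ m / (Nat.factorial m)) *
          Complex.exp (-(Complex.I * n * t))) atTop
        (𝓝 (∫ t in (0:ℝ)..(2 * Real.pi),
          Complex.exp (Complex.I * k * t) * Complex.exp (-(Complex.I * n * t)))) := by
      apply intervalIntegral.tendsto_integral_filter_of_dominated_convergence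
        (fun _ => Real.exp (|(k:ℝ)| * (2 * Real.pi)))
      · filter_upwards with N
        apply Continuous.aestronglyMeasurable
        fun_prop
      · filter_upwards with N
        refine MeasureTheory.ae_of_all _ fun t ht => ?_
        have ht' : 0 < t ∧ t ≤ 2 * Real.pi := by
          rw [Set.uIoc_of_le (by positivity)] at ht; exact ht
        have hnorm1 : ‖Complex.exp (-(Complex.I * n * t))‖ = 1 := by
          rw [Complex.norm_exp]
          norm_num [Complex.mul_re, Complex.mul_im]
        rw [norm_mul, hnorm1, mul_one]
        have habs : ‖Complex.I * (k:ℂ) * (t:ℂ)‖ ≤ |(k:ℝ)| * (2 * Real.pi) := by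
          have ht2 : |t| ≤ 2 * Real.pi := by rw [abs_of_pos ht'.1]; exact ht'.2
          simp only [norm_mul, Complex.norm_I, one_mul,
            Complex.norm_intCast, Complex.norm_real, Real.norm_eq_abs]
          exact mul_le_mul_of_nonneg_left ht2 (abs_nonneg _)
        calc ‖∑ m ∈ Finset.range N, (Complex.I * k * t) ^ m / ((Nat.factorial m : ℂ))‖
            ≤ ∑ m ∈ Finset.range N, ‖(Complex.I * k * t) ^ m / ((Nat.factorial m : ℂ))‖ :=
              norm_sum_le _ _
          _ ≤ ∑ m ∈ Finset.range N, (|(k:ℝ)| * (2 * Real.pi)) ^ m / (Nat.factorial m) := by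
              refine Finset.sum_le_sum fun m _ => ?_
              rw [norm_div, norm_pow]
              have hfac : ‖((Nat.factorial m : ℂ))‖ = (Nat.factorial m : ℝ) := by
                simp
              rw [hfac]
              gcongr
          _ ≤ Real.exp (|(k:ℝ)| * (2 * Real.pi)) :=
              Real.sum_le_exp_of_nonneg (by positivity) N
      · apply Continuous.intervalIntegrable; fun_prop
      · refine MeasureTheory.ae_of_all _ fun t _ => ?_
        exact ((hexp (Complex.I * k * t)).tendsto_sum_nat).mul_const _
    have hval : (1 / (2 * (Real.pi:ℂ))) * (∫ t in (0:ℝ)..(2 * Real.pi),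
        Complex.exp (Complex.I * k * t) * Complex.exp (-(Complex.I * n * t))) =
        (if k = n then 1 else 0) := by
      have hpi : (Real.pi : ℂ) ≠ 0 := by
        exact_mod_cast Real.pi_ne_zero
      by_cases hkn : k = n
      · subst hkn
        have : ∀ t : ℝ, Complex.exp (Complex.I * k * t) * Complex.exp (-(Complex.I * k * t))
            = 1 := by
          intro t
          rw [← Complex.exp_add]
          simp
        rw [intervalIntegral.integral_congr (fun t _ => this t), if_pos rfl]
        simp only [intervalIntegral.integral_const, sub_zero, Complex.real_smul, mul_one]
        push_cast
        field_simp
      · rw [if_neg hkn]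
        have heq : ∀ t : ℝ, Complex.exp (Complex.I * k * t) * Complex.exp (-(Complex.I * n * t))
            = Complex.exp ((Complex.I * ((k : ℂ) - n)) * t) := by
          intro t
          rw [← Complex.exp_add]
          ring_nf
        rw [intervalIntegral.integral_congr (fun t _ => heq t)]
        have hc : Complex.I * ((k : ℂ) - n) ≠ 0 := by
          refine mul_ne_zero Complex.I_ne_zero ?_
          rw [sub_ne_zero]
          exact_mod_cast hkn
        rw [integral_exp_mul_complex hc]
        have h1 : Complex.I * ((k : ℂ) - n) * ((2 * Real.pi : ℝ) : ℂ) =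
            ((k - n : ℤ) : ℂ) * (2 * Real.pi * Complex.I) := by
          push_cast; ring
        rw [h1, Complex.exp_int_mul_two_pi_mul_I]
        simp
    rw [← hval]
    exact hlim.const_mul _
  -- rewrite v as a finite sum over k
  have hvrw : ∀ N : ℕ, v N n = ∑ k ∈ Finset.Icc (-(d:ℤ)) d, a k *
      ∑ m ∈ Finset.range (N + 1), lam m n * ((k:ℂ) ^ m / (Nat.factorial m)) := by
    intro N
    rw [hv]
    simp only [hB, Finset.mul_sum]
    rw [Finset.sum_comm]
    refine Finset.sum_congr rfl fun k _ => ?_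
    refine Finset.sum_congr rfl fun m _ => ?_
    ring
  have hmem : n ∈ Finset.Icc (-(d:ℤ)) d := by
    rw [Finset.mem_Icc]
    constructor
    · linarith [neg_abs_le n, (abs_le.mp hn).1]
    · exact (abs_le.mp hn).2
  have hfin : Tendsto (fun N : ℕ => ∑ k ∈ Finset.Icc (-(d:ℤ)) d, a k *
      ∑ m ∈ Finset.range (N + 1), lam m n * ((k:ℂ) ^ m / (Nat.factorial m))) atTop
      (𝓝 (∑ k ∈ Finset.Icc (-(d:ℤ)) d, a k * (if k = n then 1 else 0))) := by
    refine tendsto_finset_sum _ fun k _ => ?_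
    exact (((key k).comp (tendsto_add_atTop_nat 1))).const_mul (a k)
  have hsum : (∑ k ∈ Finset.Icc (-(d:ℤ)) d, a k * (if k = n then 1 else 0)) = a n := by
    simp only [mul_ite, mul_one, mul_zero]
    rw [Finset.sum_ite_eq' _ n a]
    simp [hmem]
  simp only [hvrw]
  rw [← hsum]
  exact hfin
end
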